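/- Let G be a connected acyclic simple graph in which every vertex has countably infinite degree (the neighbor set of every vertex is countably infinite). Then the automorphism group of G acts transitively on the vertices: for any vertices a and b there is a graph automorphism f of G with f a = b. -/

import Mathlib

open SimpleGraph

namespace TreeAutAux

variable {V : Type*} {G : SimpleGraph V}

/-- In an acyclic graph every path between two vertices has length the distance. -/
lemma path_length_eq_dist (hconn : G.Connected) (hacyc : G.IsAcyclic) {r v : V}
    {p : G.Walk r v} (hp : p.IsPath) : p.length = G.dist r v := by
  obtain ⟨q, hq, hql⟩ := hconn.exists_path_of_dist r v
  have := hacyc.path_unique ⟨p, hp⟩ ⟨q, hq⟩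
  rw [Subtype.ext_iff] at this
  simp only at this
  rw [this, hql]

lemma isPath_concat {u v w : V} {p : G.Walk u v} (hp : p.IsPath) (h : G.Adj v w)
    (hw : w ∉ p.support) : (p.concat h).IsPath := by
  rw [← Walk.isPath_reverse_iff, Walk.reverse_concat, Walk.cons_isPath_iff]
  exact ⟨hp.reverse, by simpa using hw⟩

/-- neighbor distance dichotomy in a tree -/
lemma adj_dist_dichotomy (hconn : G.Connected) (hacyc : G.IsAcyclic) (r : V) {u v : V}
    (h : G.Adj v u) :
    G.dist r u = G.dist r v + 1 ∨ G.dist r v = G.dist r u + 1 := by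
  classical
  obtain ⟨p, hp, hpl⟩ := hconn.exists_path_of_dist r v
  by_cases hu : u ∈ p.support
  · right
    have hq : (p.takeUntil u hu).IsPath := hp.takeUntil hu
    have hs : (p.dropUntil u hu).IsPath := hp.dropUntil hu
    have hsingle : (Walk.cons h.symm (Walk.nil : G.Walk v v)).IsPath := by
      rw [Walk.cons_isPath_iff]
      exact ⟨Walk.IsPath.nil, by simp [h.ne']⟩
    have hun := hacyc.path_unique ⟨p.dropUntil u hu, hs⟩ ⟨Walk.cons h.symm Walk.nil, hsingle⟩
    rw [Subtype.ext_iff] at hun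
    simp only at hun
    have hlen : (p.takeUntil u hu).length + (p.dropUntil u hu).length = p.length := by
      rw [← Walk.length_append, Walk.take_spec]
    have h1 : (p.takeUntil u hu).length = G.dist r u :=
      path_length_eq_dist hconn hacyc hq
    have h2 : (p.dropUntil u hu).length = 1 := by rw [hun]; simp
    omega
  · left
    have hc : (p.concat h).IsPath := isPath_concat hp h hu
    have := path_length_eq_dist hconn hacyc hc
    rw [Walk.length_concat, hpl] at this
    omega

/-- vertices on shorter paths are close -/
lemma not_mem_support_of_dist_lt (hconn : G.Connected) (hacyc : G.IsAcyclic) {r v u : V}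
    {p : G.Walk r v} (hp : p.IsPath) (hd : p.length < G.dist r u) : u ∉ p.support := by
  classical
  intro hu
  have hq : (p.takeUntil u hu).IsPath := hp.takeUntil hu
  have h1 : (p.takeUntil u hu).length = G.dist r u :=
    path_length_eq_dist hconn hacyc hq
  have h2 := p.length_takeUntil_le hu
  omega

/-- uniqueness of parents -/
lemma parent_unique (hconn : G.Connected) (hacyc : G.IsAcyclic) (r : V) {u v v' : V}
    (h : G.Adj v u) (h' : G.Adj v' u)
    (hd : G.dist r v + 1 = G.dist r u) (hd' : G.dist r v' + 1 = G.dist r u) : v = v' := by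
  obtain ⟨p, hp, hpl⟩ := hconn.exists_path_of_dist r v
  obtain ⟨p', hp', hpl'⟩ := hconn.exists_path_of_dist r v'
  have hu : u ∉ p.support := not_mem_support_of_dist_lt hconn hacyc hp (by omega)
  have hu' : u ∉ p'.support := not_mem_support_of_dist_lt hconn hacyc hp' (by omega)
  have hc : (p.concat h).IsPath := isPath_concat hp h hu
  have hc' : (p'.concat h').IsPath := isPath_concat hp' h' hu'
  have hun := hacyc.path_unique ⟨p.concat h, hc⟩ ⟨p'.concat h', hc'⟩
  rw [Subtype.ext_iff] at hun
  simp only at hun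
  obtain ⟨hv, -⟩ := Walk.concat_inj hun
  exact hv

/-- every vertex at positive distance from the root has a parent -/
lemma exists_parent (hconn : G.Connected) (hacyc : G.IsAcyclic) (r : V) {v : V}
    (hv : G.dist r v ≠ 0) :
    ∃ u, G.Adj u v ∧ G.dist r u + 1 = G.dist r v := by
  obtain ⟨p, hp, hpl⟩ := hconn.exists_path_of_dist v r
  cases p with
  | nil => rw [dist_comm] at hv; simp [← hpl] at hv
  | @cons _ u _ h q =>
    refine ⟨u, h.symm, ?_⟩
    have hq : q.reverse.IsPath := (hp.of_cons).reverse
    have h1 : q.reverse.length = G.dist r u := path_length_eq_dist hconn hacyc hq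
    have h2 : q.length + 1 = G.dist r v := by
      rw [dist_comm]; rw [← hpl]; simp [Walk.length_cons]
    simp only [Walk.length_reverse] at h1
    omega

/-- The set of children of `v` in the tree rooted at `r`. -/
def children (G : SimpleGraph V) (r v : V) : Set V :=
  {u | G.Adj v u ∧ G.dist r u = G.dist r v + 1}

lemma children_adj {r v u : V} (hu : u ∈ children G r v) : G.Adj v u := hu.1

lemma children_dist {r v u : V} (hu : u ∈ children G r v) :
    G.dist r u = G.dist r v + 1 := hu.2

lemma children_denumerable (hconn : G.Connected) (hacyc : G.IsAcyclic)
    (hdeg : ∀ v : V, Countable (G.neighborSet v) ∧ Infinite (G.neighborSet v))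
    (r v : V) : Nonempty (ℕ ≃ ↥(children G r v)) := by
  have hsub : children G r v ⊆ G.neighborSet v := fun u hu => hu.1
  have hcnt : (G.neighborSet v).Countable := Set.countable_coe_iff.mp (hdeg v).1
  have hcnt' : (children G r v).Countable := hcnt.mono hsub
  have hparent : (G.neighborSet v \ children G r v) ⊆
      {u | G.Adj u v ∧ G.dist r u + 1 = G.dist r v} := by
    rintro u ⟨hadj, hnc⟩
    rcases adj_dist_dichotomy hconn hacyc r (hadj : G.Adj v u) with hd | hd
    · exact absurd ⟨hadj, hd⟩ hnc
    · exact ⟨hadj.symm, by omega⟩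
  have hpsub : {u | G.Adj u v ∧ G.dist r u + 1 = G.dist r v}.Subsingleton := by
    rintro x ⟨hx1, hx2⟩ y ⟨hy1, hy2⟩
    exact parent_unique hconn hacyc r hx1 hy1 hx2 hy2
  have hfin : (G.neighborSet v \ children G r v).Finite :=
    (hpsub.anti hparent).finite
  have hinf : (children G r v).Infinite := by
    have hninf : (G.neighborSet v).Infinite := Set.infinite_coe_iff.mp (hdeg v).2
    have := hninf.diff hfin
    refine this.mono ?_
    intro u hu
    rcases hu with ⟨hu1, hu2⟩
    by_contra hc
    exact hu2 ⟨hu1, hc⟩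
  have : Countable ↥(children G r v) := hcnt'.to_subtype
  have : Infinite ↥(children G r v) := hinf.to_subtype
  obtain ⟨d⟩ := nonempty_denumerable ↥(children G r v)
  exact ⟨(@Denumerable.eqv _ d).symm⟩

/-- The canonical labelling of the tree by lists of naturals. -/
def phi (r : V) (c : ∀ v : V, ℕ ≃ ↥(children G r v)) : List ℕ → V
  | [] => r
  | n :: w => (c (phi r c w) n : V)

lemma phi_mem_children (r : V) (c : ∀ v : V, ℕ ≃ ↥(children G r v)) (n : ℕ) (w : List ℕ) :
    phi r c (n :: w) ∈ children G r (phi r c w) := (c (phi r c w) n).2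

lemma phi_dist (r : V) (c : ∀ v : V, ℕ ≃ ↥(children G r v)) (w : List ℕ) :
    G.dist r (phi r c w) = w.length := by
  induction w with
  | nil => simp [phi, dist_self]
  | cons n w ih =>
    have := children_dist (phi_mem_children r c n w)
    simp [this, ih]

lemma phi_injective (hconn : G.Connected) (hacyc : G.IsAcyclic) (r : V)
    (c : ∀ v : V, ℕ ≃ ↥(children G r v)) : Function.Injective (phi r c) := by
  intro s t hst
  induction s generalizing t with
  | nil =>
    have h0 : t.length = 0 := by
      rw [← phi_dist r c t, ← hst]
      exact dist_self
    exact (List.length_eq_zero_iff.mp h0).symm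
  | cons n w ih =>
    cases t with
    | nil =>
      have h0 : G.dist r (phi r c (n :: w)) = 0 := by
        rw [hst]
        exact dist_self
      rw [phi_dist] at h0
      simp at h0
    | cons m w' =>
      have h1 := phi_mem_children r c n w
      have h2 := phi_mem_children r c m w'
      rw [hst] at h1
      have hpar : phi r c w = phi r c w' := by
        refine parent_unique hconn hacyc r (children_adj h1) (children_adj h2) ?_ ?_
        · have := children_dist h1; omega
        · have := children_dist h2; omega
      have hww : w = w' := ih hpar
      subst hww
      have : (c (phi r c w) n : V) = (c (phi r c w) m : V) := by
        simpa [phi, hpar] using hst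
      have := (c (phi r c w)).injective (Subtype.coe_injective this)
      rw [this]

lemma phi_surjective (hconn : G.Connected) (hacyc : G.IsAcyclic) (r : V)
    (c : ∀ v : V, ℕ ≃ ↥(children G r v)) : Function.Surjective (phi r c) := by
  have key : ∀ (k : ℕ) (v : V), G.dist r v = k → ∃ w, phi r c w = v := by
    intro k
    induction k using Nat.strong_induction_on with
    | _ k ih =>
      intro v hv
      rcases Nat.eq_zero_or_pos k with hk | hk
      · subst hk
        have : r = v := (hconn.dist_eq_zero_iff).mp hv
        exact ⟨[], this⟩
      · obtain ⟨u, hadj, hdu⟩ := exists_parent hconn hacyc r (by rw [hv]; omega)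
        obtain ⟨w, hw⟩ := ih (G.dist r u) (by omega) u rfl
        have hv' : v ∈ children G r u := ⟨hadj, by omega⟩
        rw [← hw] at hv'
        refine ⟨((c (phi r c w)).symm ⟨v, hv'⟩ : ℕ) :: w, ?_⟩
        show ((c (phi r c w)) ((c (phi r c w)).symm ⟨v, hv'⟩) : V) = v
        rw [Equiv.apply_symm_apply]
  intro v
  exact key (G.dist r v) v rfl

/-- The canonical countably-branching tree on `List ℕ`. -/
def T : SimpleGraph (List ℕ) where
  Adj s t := (∃ n, t = n :: s) ∨ (∃ n, s = n :: t)
  symm := ⟨by rintro s t (h | h) <;> [exact Or.inr h; exact Or.inl h]⟩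
  loopless := by
    constructor
    rintro s (⟨n, h⟩ | ⟨n, h⟩) <;>
    · apply_fun List.length at h
      simp at h

lemma phi_adj_iff (hconn : G.Connected) (hacyc : G.IsAcyclic) (r : V)
    (c : ∀ v : V, ℕ ≃ ↥(children G r v)) (s t : List ℕ) :
    G.Adj (phi r c s) (phi r c t) ↔ T.Adj s t := by
  constructor
  · intro h
    rcases adj_dist_dichotomy hconn hacyc r h with hd | hd
    · -- phi t is a child of phi s
      have ht : phi r c t ∈ children G r (phi r c s) := ⟨h, hd⟩
      set n := (c (phi r c s)).symm ⟨phi r c t, ht⟩ with hn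
      have : phi r c (n :: s) = phi r c t := by
        show ((c (phi r c s)) n : V) = phi r c t
        rw [hn, Equiv.apply_symm_apply]
      have := phi_injective hconn hacyc r c this
      exact Or.inl ⟨n, this.symm⟩
    · have ht : phi r c s ∈ children G r (phi r c t) := ⟨h.symm, hd⟩
      set n := (c (phi r c t)).symm ⟨phi r c s, ht⟩ with hn
      have : phi r c (n :: t) = phi r c s := by
        show ((c (phi r c t)) n : V) = phi r c s
        rw [hn, Equiv.apply_symm_apply]
      have := phi_injective hconn hacyc r c this
      exact Or.inr ⟨n, this.symm⟩
  · rintro (⟨n, rfl⟩ | ⟨n, rfl⟩)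
    · exact children_adj (phi_mem_children r c n s)
    · exact (children_adj (phi_mem_children r c n t)).symm

/-- The canonical tree isomorphism rooted anywhere. -/
noncomputable def treeIso (hconn : G.Connected) (hacyc : G.IsAcyclic)
    (hdeg : ∀ v : V, Countable (G.neighborSet v) ∧ Infinite (G.neighborSet v))
    (r : V) : T ≃g G := by
  have c : ∀ v : V, ℕ ≃ ↥(children G r v) :=
    fun v => (children_denumerable hconn hacyc hdeg r v).some
  exact
    { toEquiv := Equiv.ofBijective (phi r c)
        ⟨phi_injective hconn hacyc r c, phi_surjective hconn hacyc r c⟩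
      map_rel_iff' := by
        intro s t
        exact phi_adj_iff hconn hacyc r c s t }

lemma treeIso_nil (hconn : G.Connected) (hacyc : G.IsAcyclic)
    (hdeg : ∀ v : V, Countable (G.neighborSet v) ∧ Infinite (G.neighborSet v))
    (r : V) : treeIso hconn hacyc hdeg r [] = r := rfl

end TreeAutAux

/-- The automorphism group of a connected acyclic simple graph all of whose vertices
have countably infinite degree acts transitively on the vertices. -/
theorem tree_aut_vertex_transitive {V : Type*} (G : SimpleGraph V)
    (hconn : G.Connected) (hacyc : G.IsAcyclic)
    (hdeg : ∀ v : V, Countable (G.neighborSet v) ∧ Infinite (G.neighborSet v))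
    (a b : V) :
    ∃ f : G ≃g G, f a = b := by
  classical
  let ia := TreeAutAux.treeIso hconn hacyc hdeg a
  let ib := TreeAutAux.treeIso hconn hacyc hdeg b
  refine ⟨ia.symm.trans ib, ?_⟩
  have ha : ia.symm a = [] := by
    have hnil : ia [] = a := TreeAutAux.treeIso_nil hconn hacyc hdeg a
    rw [← hnil]
    exact ia.toEquiv.symm_apply_apply []
  show ib (ia.symm a) = b
  rw [ha]
  exact TreeAutAux.treeIso_nil hconn hacyc hdeg b
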